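/- Let σ̄, σ̃, μ, γ, p̄ > 0 and let R_s > 0 satisfy (1 − γ/R_s)·(R_s·coth R_s − 1)/R_s² = σ̃/(3σ̄). Define σ_s(r) := σ̄(1 − γ/R_s)·R_s·sinh r/(r·sinh R_s) and p_s(r) := −μ·σ_s(r) + (μσ̃/6)·r² + p̄ + μσ̄(1 − γ/R_s) − (μσ̃/6)·R_s² for r ∈ (0, R_s]. Then on (0, R_s]: σ_s''(r) + (2/r)σ_s'(r) = σ_s(r); p_s''(r) + (2/r)p_s'(r) = −μ(σ_s(r) − σ̃); moreover σ_s(R_s) = σ̄(1 − γ/R_s), p_s(R_s) = p̄, and p_s'(R_s) = 0. -/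

import Mathlib

noncomputable def gg (t : ℝ) : ℝ := Real.sinh t / t
noncomputable def gg1 (t : ℝ) : ℝ := (Real.cosh t * t - Real.sinh t) / t ^ 2

lemma hasDerivAt_gg {r : ℝ} (hr : r ≠ 0) : HasDerivAt gg (gg1 r) r := by
  have h := (Real.hasDerivAt_sinh r).div (hasDerivAt_id r) hr
  have e : gg = Real.sinh / id := by funext t; simp [gg]
  rw [e]; simpa [gg1] using h

lemma hasDerivAt_gg1 {r : ℝ} (hr : r ≠ 0) :
    HasDerivAt gg1 ((Real.sinh r * r * r ^ 2 - (Real.cosh r * r - Real.sinh r) * (2 * r)) / (r ^ 2) ^ 2) r := by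
  have hn : HasDerivAt (fun t => Real.cosh t * t - Real.sinh t) (Real.sinh r * r) r := by
    have := ((Real.hasDerivAt_cosh r).mul (hasDerivAt_id r)).sub (Real.hasDerivAt_sinh r)
    have e : (fun t => Real.cosh t * t - Real.sinh t) = Real.cosh * id - Real.sinh := by
      funext t; simp
    rw [e]; simpa using this
  have hd : HasDerivAt (fun t : ℝ => t ^ 2) (2 * r) r := by
    simpa using hasDerivAt_pow 2 r
  have := hn.div hd (pow_ne_zero 2 hr)
  exact this

/-- The nutrient component of the radial stationary solution. -/
noncomputable def sigmas (σb γ Rs r : ℝ) : ℝ :=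
  σb * (1 - γ / Rs) * (Rs * Real.sinh r) / (r * Real.sinh Rs)

/-- The pressure component of the radial stationary solution. -/
noncomputable def ps (σb σt μ γ pb Rs r : ℝ) : ℝ :=
  -μ * sigmas σb γ Rs r + (μ * σt / 6) * r ^ 2 + pb + μ * σb * (1 - γ / Rs)
    - (μ * σt / 6) * Rs ^ 2

/-- The radial stationary solution satisfies the radially reduced equations
`σ'' + (2/r)σ' = σ` and `p'' + (2/r)p' = -μ(σ - σ̃)` on `(0, Rs]`, together with
the boundary conditions `σ(Rs) = σ̄(1-γ/Rs)`, `p(Rs) = p̄` and `p'(Rs) = 0`. -/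
lemma sigmas_eq (σb γ Rs : ℝ) :
    sigmas σb γ Rs = fun r => (σb * (1 - γ / Rs) * Rs / Real.sinh Rs) * gg r := by
  funext r; unfold sigmas gg; ring

lemma hasDerivAt_sigmas (σb γ Rs : ℝ) {r : ℝ} (hr : r ≠ 0) :
    HasDerivAt (sigmas σb γ Rs) ((σb * (1 - γ / Rs) * Rs / Real.sinh Rs) * gg1 r) r := by
  rw [sigmas_eq]
  exact (hasDerivAt_gg hr).const_mul _

lemma deriv_sigmas_eventually (σb γ Rs : ℝ) {r : ℝ} (hr : r ≠ 0) :
    deriv (sigmas σb γ Rs) =ᶠ[nhds r]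
      fun t => (σb * (1 - γ / Rs) * Rs / Real.sinh Rs) * gg1 t := by
  filter_upwards [isOpen_compl_singleton.mem_nhds (by simpa using hr : r ∈ ({0}ᶜ : Set ℝ))] with t ht
  exact (hasDerivAt_sigmas σb γ Rs (by simpa using ht)).deriv

lemma deriv2_sigmas (σb γ Rs : ℝ) {r : ℝ} (hr : r ≠ 0) :
    deriv (deriv (sigmas σb γ Rs)) r =
      (σb * (1 - γ / Rs) * Rs / Real.sinh Rs) *
        ((Real.sinh r * r * r ^ 2 - (Real.cosh r * r - Real.sinh r) * (2 * r)) / (r ^ 2) ^ 2) := by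
  rw [(deriv_sigmas_eventually σb γ Rs hr).deriv_eq]
  exact (((hasDerivAt_gg1 hr).const_mul _)).deriv

lemma hasDerivAt_ps (σb σt μ γ pb Rs : ℝ) {r : ℝ} (hr : r ≠ 0) :
    HasDerivAt (ps σb σt μ γ pb Rs)
      (-μ * ((σb * (1 - γ / Rs) * Rs / Real.sinh Rs) * gg1 r) + (μ * σt / 6) * (2 * r)) r := by
  unfold ps
  have h1 := (hasDerivAt_sigmas σb γ Rs hr).const_mul (-μ)
  have h2 : HasDerivAt (fun t : ℝ => (μ * σt / 6) * t ^ 2) ((μ * σt / 6) * (2 * r)) r := by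
    simpa [mul_comm, mul_assoc, mul_left_comm] using (hasDerivAt_pow 2 r).const_mul (μ * σt / 6)
  have := (((h1.add h2).add_const (pb + μ * σb * (1 - γ / Rs))).sub_const ((μ * σt / 6) * Rs ^ 2))
  simp only [Pi.add_apply] at this
  exact this.congr_of_eventuallyEq (Filter.Eventually.of_forall fun x => by beta_reduce; ring)

lemma deriv_ps_eventually (σb σt μ γ pb Rs : ℝ) {r : ℝ} (hr : r ≠ 0) :
    deriv (ps σb σt μ γ pb Rs) =ᶠ[nhds r]
      fun t => -μ * ((σb * (1 - γ / Rs) * Rs / Real.sinh Rs) * gg1 t) + (μ * σt / 6) * (2 * t) := by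
  filter_upwards [isOpen_compl_singleton.mem_nhds (by simpa using hr : r ∈ ({0}ᶜ : Set ℝ))] with t ht
  exact (hasDerivAt_ps σb σt μ γ pb Rs (by simpa using ht)).deriv

theorem stmt1 (σb σt μ γ pb Rs : ℝ)
    (hσb : 0 < σb) (hσt : 0 < σt) (hμ : 0 < μ) (hγ : 0 < γ) (hpb : 0 < pb)
    (hRs : 0 < Rs)
    (hstat : (1 - γ / Rs) * (Rs * (Real.cosh Rs / Real.sinh Rs) - 1) / Rs ^ 2
      = σt / (3 * σb)) :
    (∀ r ∈ Set.Ioc (0 : ℝ) Rs,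
      deriv (deriv (sigmas σb γ Rs)) r + (2 / r) * deriv (sigmas σb γ Rs) r
        = sigmas σb γ Rs r) ∧
    (∀ r ∈ Set.Ioc (0 : ℝ) Rs,
      deriv (deriv (ps σb σt μ γ pb Rs)) r + (2 / r) * deriv (ps σb σt μ γ pb Rs) r
        = -μ * (sigmas σb γ Rs r - σt)) ∧
    sigmas σb γ Rs Rs = σb * (1 - γ / Rs) ∧
    ps σb σt μ γ pb Rs Rs = pb ∧
    deriv (ps σb σt μ γ pb Rs) Rs = 0 := by
  have hRs0 : Rs ≠ 0 := ne_of_gt hRs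
  have hsh : Real.sinh Rs ≠ 0 := ne_of_gt (Real.sinh_pos_iff.2 hRs)
  set C : ℝ := σb * (1 - γ / Rs) * Rs / Real.sinh Rs with hC
  refine ⟨?_, ?_, ?_, ?_, ?_⟩
  · intro r hr
    have hr0 : r ≠ 0 := ne_of_gt hr.1
    rw [deriv2_sigmas σb γ Rs hr0, (hasDerivAt_sigmas σb γ Rs hr0).deriv, sigmas_eq]
    unfold gg gg1
    field_simp
    ring
  · intro r hr
    have hr0 : r ≠ 0 := ne_of_gt hr.1
    rw [(deriv_ps_eventually σb σt μ γ pb Rs hr0).deriv_eq,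
      (hasDerivAt_ps σb σt μ γ pb Rs hr0).deriv]
    have hd : HasDerivAt
        (fun t => -μ * ((σb * (1 - γ / Rs) * Rs / Real.sinh Rs) * gg1 t) + (μ * σt / 6) * (2 * t))
        (-μ * ((σb * (1 - γ / Rs) * Rs / Real.sinh Rs) *
          ((Real.sinh r * r * r ^ 2 - (Real.cosh r * r - Real.sinh r) * (2 * r)) / (r ^ 2) ^ 2))
          + (μ * σt / 6) * 2) r := by
      have h1 := ((hasDerivAt_gg1 hr0).const_mul (σb * (1 - γ / Rs) * Rs / Real.sinh Rs)).const_mul (-μ)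
      have h2 : HasDerivAt (fun t : ℝ => (μ * σt / 6) * (2 * t)) ((μ * σt / 6) * 2) r := by
        simpa using ((hasDerivAt_id r).const_mul 2).const_mul (μ * σt / 6)
      exact h1.add h2
    rw [hd.deriv]
    unfold sigmas gg1
    field_simp
    ring
  · unfold sigmas; field_simp
  · have h : sigmas σb γ Rs Rs = σb * (1 - γ / Rs) := by unfold sigmas; field_simp
    unfold ps; rw [h]; ring
  · rw [(hasDerivAt_ps σb σt μ γ pb Rs hRs0).deriv]
    have key : (σb * (1 - γ / Rs) * Rs / Real.sinh Rs) * gg1 Rs = σt * Rs / 3 := by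
      unfold gg1
      field_simp at hstat ⊢
      nlinarith [hstat, Real.sinh_pos_iff.2 hRs]
    rw [key]; ring
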